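/- Let y1, y2, y' be points in R^d and H an affine hyperplane (or more generally an affine subspace A) such that conv({y1,y2}) ∩ A is a singleton, conv({y1,y'}) ∩ A is empty or a singleton, and conv({y2,y'}) ∩ A is empty or a singleton, with y' ∉ A implying at least one of conv({y1,y'}) ∩ A, conv({y2,y'}) ∩ A is empty. Then conv({y1,y2,y'}) ∩ A is a segment (possibly degenerate), i.e., the convex hull of at most two points of A. -/

import Mathlib

open Set

section Key
variable {E : Type*} [AddCommGroup E] [Module ℝ E]

lemma branchA (y1 y2 y' : E)
    {a1 a2 a3 b1 b2 : ℝ} (ha1 : 0 ≤ a1) (ha2 : 0 ≤ a2) (ha3 : 0 ≤ a3) (hb1 : 0 ≤ b1)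
    (hsa : a1 + a2 + a3 = 1) (hsb : b1 + b2 = 1)
    (hD : a1 < b1) (hc : a1 * b2 ≤ b1 * a2) :
    ∃ s : ℝ, 1 ≤ s ∧
      (1 - s) • (b1 • y1 + b2 • y2) + s • (a1 • y1 + a2 • y2 + a3 • y')
        ∈ segment ℝ y2 y' := by
  have hD' : 0 < b1 - a1 := by linarith
  refine ⟨b1 / (b1 - a1), ?_, ?_⟩
  · rw [le_div_iff₀ hD']; linarith
  · refine ⟨(b1 * a2 - a1 * b2) / (b1 - a1), (b1 * a3) / (b1 - a1),
      div_nonneg (by linarith) hD'.le, div_nonneg (by positivity) hD'.le, ?_, ?_⟩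
    · field_simp
      linear_combination b1 * hsa - a1 * hsb
    · match_scalars <;> field_simp <;> ring

lemma keyLemma (y1 y2 y' : E)
    {a1 a2 a3 b1 b2 : ℝ} (ha1 : 0 ≤ a1) (ha2 : 0 ≤ a2) (ha3 : 0 ≤ a3)
    (hb1 : 0 ≤ b1) (hb2 : 0 ≤ b2)
    (hsa : a1 + a2 + a3 = 1) (hsb : b1 + b2 = 1) (ha3' : 0 < a3) :
    ∃ s : ℝ, 1 ≤ s ∧
      ((1 - s) • (b1 • y1 + b2 • y2) + s • (a1 • y1 + a2 • y2 + a3 • y')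
        ∈ segment ℝ y1 y' ∪ segment ℝ y2 y') := by
  have hswap : ∀ s : ℝ,
      (1 - s) • (b1 • y1 + b2 • y2) + s • (a1 • y1 + a2 • y2 + a3 • y')
      = (1 - s) • (b2 • y2 + b1 • y1) + s • (a2 • y2 + a1 • y1 + a3 • y') := by
    intro s; module
  rcases le_or_gt b1 a1 with h | h
  · -- then a2 < b2 and a2 * b1 ≤ b2 * a1 : branch B
    have h2 : a2 < b2 := by linarith
    have hc : a2 * b1 ≤ b2 * a1 := by nlinarith
    obtain ⟨s, hs, hmem⟩ := branchA y2 y1 y' (a1 := a2) (a2 := a1) (a3 := a3)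
      (b1 := b2) (b2 := b1) ha2 ha1 ha3 hb2 (by linarith) (by linarith) h2 hc
    exact ⟨s, hs, by rw [hswap]; exact Or.inl hmem⟩
  · by_cases hc : a1 * b2 ≤ b1 * a2
    · obtain ⟨s, hs, hmem⟩ := branchA y1 y2 y' ha1 ha2 ha3 hb1 hsa hsb h hc
      exact ⟨s, hs, Or.inr hmem⟩
    · push_neg at hc
      have h2 : a2 < b2 := by nlinarith
      obtain ⟨s, hs, hmem⟩ := branchA y2 y1 y' (a1 := a2) (a2 := a1) (a3 := a3)
        (b1 := b2) (b2 := b1) ha2 ha1 ha3 hb2 (by linarith) (by linarith) h2 (by nlinarith)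
      exact ⟨s, hs, by rw [hswap]; exact Or.inl hmem⟩

lemma tri_mem {y1 y2 y' p : E} (hp : p ∈ convexHull ℝ ({y1, y2, y'} : Set E)) :
    ∃ c1 c2 v1 v2 : ℝ, 0 ≤ c1 ∧ 0 ≤ c2 ∧ c1 + c2 = 1 ∧ 0 ≤ v1 ∧ 0 ≤ v2 ∧
      v1 + v2 = 1 ∧ p = (c2 * v1) • y1 + (c2 * v2) • y2 + c1 • y' := by
  have hset : ({y1, y2, y'} : Set E) = insert y' {y1, y2} := by
    ext x; simp only [Set.mem_insert_iff, Set.mem_singleton_iff]; tauto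
  rw [hset, convexHull_insert ⟨y1, by simp⟩, mem_convexJoin] at hp
  obtain ⟨q, hq, m, hm, hseg⟩ := hp
  rw [Set.mem_singleton_iff] at hq
  subst hq
  rw [convexHull_pair] at hm
  obtain ⟨v1, v2, hv1, hv2, hv, hmv⟩ := hm
  obtain ⟨c1, c2, hc1, hc2, hc, hpc⟩ := hseg
  refine ⟨c1, c2, v1, v2, hc1, hc2, hc, hv1, hv2, hv, ?_⟩
  rw [← hpc, ← hmv]
  module
end Key

lemma segsub {d : ℕ} {A : AffineSubspace ℝ (Fin d → ℝ)} {z w : Fin d → ℝ}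
    {S : Set (Fin d → ℝ)}
    (hz : z ∈ convexHull ℝ S ∩ (A : Set (Fin d → ℝ)))
    (hw : w ∈ convexHull ℝ S ∩ (A : Set (Fin d → ℝ))) :
    segment ℝ z w ⊆ convexHull ℝ S ∩ (A : Set (Fin d → ℝ)) :=
  Set.subset_inter ((convex_convexHull ℝ S).segment_subset hz.1 hw.1)
    (A.convex.segment_subset hz.2 hw.2)

lemma auxMain (d : ℕ) (y1 y2 y' : Fin d → ℝ) (A : AffineSubspace ℝ (Fin d → ℝ))
    (h12 : ∃ z : Fin d → ℝ,
      convexHull ℝ ({y1, y2} : Set (Fin d → ℝ)) ∩ (A : Set (Fin d → ℝ)) = {z})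
    (h2e : convexHull ℝ ({y2, y'} : Set (Fin d → ℝ)) ∩ (A : Set (Fin d → ℝ)) = ∅)
    (h1' : convexHull ℝ ({y1, y'} : Set (Fin d → ℝ)) ∩ (A : Set (Fin d → ℝ)) = ∅ ∨
      ∃ z : Fin d → ℝ,
        convexHull ℝ ({y1, y'} : Set (Fin d → ℝ)) ∩ (A : Set (Fin d → ℝ)) = {z}) :
    ∃ a b : Fin d → ℝ, a ∈ A ∧ b ∈ A ∧
      convexHull ℝ ({y1, y2, y'} : Set (Fin d → ℝ)) ∩ (A : Set (Fin d → ℝ)) =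
        convexHull ℝ ({a, b} : Set (Fin d → ℝ)) := by
  obtain ⟨z, hz⟩ := h12
  have hzmem : z ∈ convexHull ℝ ({y1, y2} : Set (Fin d → ℝ)) ∩ (A : Set (Fin d → ℝ)) := by
    rw [hz]; exact rfl
  have hzseg : z ∈ segment ℝ y1 y2 := by
    rw [← convexHull_pair]; exact hzmem.1
  obtain ⟨b1, b2, hb1, hb2, hsb, hzv⟩ := hzseg
  have hztri : z ∈ convexHull ℝ ({y1, y2, y'} : Set (Fin d → ℝ)) :=
    convexHull_mono (by intro x hx; simp at hx ⊢; tauto) hzmem.1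
  -- key step: any point of the triangle ∩ A with positive y' weight produces
  -- a point of A on one of the two sides through y'
  have main : ∀ p ∈ convexHull ℝ ({y1, y2, y'} : Set (Fin d → ℝ)) ∩ (A : Set (Fin d → ℝ)),
      p = z ∨ ∃ s : ℝ, 1 ≤ s ∧ ((1 - s) • z + s • p ∈
        convexHull ℝ ({y1, y'} : Set (Fin d → ℝ)) ∩ (A : Set (Fin d → ℝ))) := by
    intro p ⟨hpt, hpA⟩
    obtain ⟨c1, c2, v1, v2, hc1, hc2, hc, hv1, hv2, hv, hpv⟩ := tri_mem hpt
    rcases eq_or_lt_of_le hc1 with h0 | h0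
    · left
      have hpm : p ∈ segment ℝ y1 y2 := by
        refine ⟨v1, v2, hv1, hv2, hv, ?_⟩
        rw [hpv, ← h0]
        have : c2 = 1 := by linarith
        rw [this]; module
      have : p ∈ convexHull ℝ ({y1, y2} : Set (Fin d → ℝ)) ∩ (A : Set (Fin d → ℝ)) := by
        exact ⟨by rw [convexHull_pair]; exact hpm, hpA⟩
      rw [hz] at this; exact this
    · right
      obtain ⟨s, hs, hmem⟩ := keyLemma y1 y2 y'
        (a1 := c2 * v1) (a2 := c2 * v2) (a3 := c1)
        (by positivity) (by positivity) hc1 hb1 hb2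
        (by nlinarith) hsb h0
      rw [hzv, ← hpv] at hmem
      have hqA : (1 - s) • z + s • p ∈ A := by
        have := A.smul_vsub_vadd_mem s hpA hzmem.2 hzmem.2
        have heq : s • (p -ᵥ z) +ᵥ z = (1 - s) • z + s • p := by
          simp only [vsub_eq_sub, vadd_eq_add]; module
        rwa [heq] at this
      rcases hmem with hmem | hmem
      · exact ⟨s, hs, ⟨by rw [convexHull_pair]; exact hmem, hqA⟩⟩
      · exfalso
        have : (1 - s) • z + s • p ∈
            convexHull ℝ ({y2, y'} : Set (Fin d → ℝ)) ∩ (A : Set (Fin d → ℝ)) :=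
          ⟨by rw [convexHull_pair]; exact hmem, hqA⟩
        rw [h2e] at this; exact this
  rcases h1' with h1e | ⟨w, hw⟩
  · -- triangle ∩ A = {z}
    refine ⟨z, z, hzmem.2, hzmem.2, ?_⟩
    have : convexHull ℝ ({z, z} : Set (Fin d → ℝ)) = {z} := by
      simp
    rw [this]
    apply Set.eq_singleton_iff_unique_mem.mpr
    refine ⟨⟨hztri, hzmem.2⟩, ?_⟩
    intro p hp
    rcases main p hp with h | ⟨s, hs, hmem⟩
    · exact h
    · exfalso; rw [h1e] at hmem; exact hmem
  · -- triangle ∩ A = segment z w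
    have hwmem : w ∈ convexHull ℝ ({y1, y'} : Set (Fin d → ℝ)) ∩ (A : Set (Fin d → ℝ)) := by
      rw [hw]; exact rfl
    have hwtri : w ∈ convexHull ℝ ({y1, y2, y'} : Set (Fin d → ℝ)) :=
      convexHull_mono (by intro x hx; simp at hx ⊢; tauto) hwmem.1
    refine ⟨z, w, hzmem.2, hwmem.2, ?_⟩
    rw [convexHull_pair]
    apply Set.Subset.antisymm
    · intro p hp
      rcases main p hp with h | ⟨s, hs, hmem⟩
      · rw [h]; exact left_mem_segment ℝ z w
      · rw [hw] at hmem
        have hs0 : (0:ℝ) < s := by linarith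
        refine ⟨(s - 1) / s, 1 / s, div_nonneg (by linarith) (by linarith),
          by positivity, by field_simp; ring, ?_⟩
        have hqw : (1 - s) • z + s • p = w := hmem
        rw [← hqw]
        match_scalars <;> field_simp <;> ring
    · exact segsub ⟨hztri, hzmem.2⟩ ⟨hwtri, hwmem.2⟩

/-- Geometric core of Lemma 3: under singleton/empty intersection conditions
of the three segment sides with an affine subspace `A`, the triangle meets
`A` in a (possibly degenerate) segment. -/
theorem stmt_18 (d : ℕ) (y1 y2 y' : Fin d → ℝ) (A : AffineSubspace ℝ (Fin d → ℝ))
    (h12 : ∃ z : Fin d → ℝ,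
      convexHull ℝ ({y1, y2} : Set (Fin d → ℝ)) ∩ (A : Set (Fin d → ℝ)) = {z})
    (h1' : convexHull ℝ ({y1, y'} : Set (Fin d → ℝ)) ∩ (A : Set (Fin d → ℝ)) = ∅ ∨
      ∃ z : Fin d → ℝ,
        convexHull ℝ ({y1, y'} : Set (Fin d → ℝ)) ∩ (A : Set (Fin d → ℝ)) = {z})
    (h2' : convexHull ℝ ({y2, y'} : Set (Fin d → ℝ)) ∩ (A : Set (Fin d → ℝ)) = ∅ ∨
      ∃ z : Fin d → ℝ,
        convexHull ℝ ({y2, y'} : Set (Fin d → ℝ)) ∩ (A : Set (Fin d → ℝ)) = {z})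
    (hout : y' ∉ (A : Set (Fin d → ℝ)) →
      convexHull ℝ ({y1, y'} : Set (Fin d → ℝ)) ∩ (A : Set (Fin d → ℝ)) = ∅ ∨
      convexHull ℝ ({y2, y'} : Set (Fin d → ℝ)) ∩ (A : Set (Fin d → ℝ)) = ∅) :
    ∃ a b : Fin d → ℝ, a ∈ A ∧ b ∈ A ∧
      convexHull ℝ ({y1, y2, y'} : Set (Fin d → ℝ)) ∩ (A : Set (Fin d → ℝ)) =
        convexHull ℝ ({a, b} : Set (Fin d → ℝ)) := by
  by_cases hy' : y' ∈ (A : Set (Fin d → ℝ))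
  · -- y' ∈ A : the intersection is segment z y'
    obtain ⟨z, hz⟩ := h12
    have hzmem : z ∈ convexHull ℝ ({y1, y2} : Set (Fin d → ℝ)) ∩ (A : Set (Fin d → ℝ)) := by
      rw [hz]; exact rfl
    have hztri : z ∈ convexHull ℝ ({y1, y2, y'} : Set (Fin d → ℝ)) :=
      convexHull_mono (by intro x hx; simp at hx ⊢; tauto) hzmem.1
    have hy'tri : y' ∈ convexHull ℝ ({y1, y2, y'} : Set (Fin d → ℝ)) :=
      subset_convexHull ℝ _ (by simp)
    refine ⟨z, y', hzmem.2, hy', ?_⟩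
    rw [convexHull_pair]
    apply Set.Subset.antisymm
    · rintro p ⟨hpt, hpA⟩
      obtain ⟨c1, c2, v1, v2, hc1, hc2, hc, hv1, hv2, hv, hpv⟩ := tri_mem hpt
      rcases eq_or_lt_of_le hc2 with h0 | h0
      · have hpy : p = y' := by
          rw [hpv, ← h0]
          have h1 : c1 = 1 := by linarith
          rw [h1]; module
        rw [hpy]; exact right_mem_segment ℝ z y'
      · have hmA : v1 • y1 + v2 • y2 ∈ A := by
          have h1 := A.smul_vsub_vadd_mem c2⁻¹ hpA hy' hy'
          have heq : c2⁻¹ • (p -ᵥ y') +ᵥ y' = v1 • y1 + v2 • y2 := by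
            simp only [vsub_eq_sub, vadd_eq_add]
            rw [hpv]
            match_scalars <;> field_simp <;> ring_nf <;> linarith
          rwa [heq] at h1
        have hmz : v1 • y1 + v2 • y2 = z := by
          have hmm : v1 • y1 + v2 • y2 ∈
              convexHull ℝ ({y1, y2} : Set (Fin d → ℝ)) ∩ (A : Set (Fin d → ℝ)) :=
            ⟨by rw [convexHull_pair]; exact ⟨v1, v2, hv1, hv2, hv, rfl⟩, hmA⟩
          rw [hz] at hmm; exact hmm
        refine ⟨c2, c1, hc2, hc1, by linarith, ?_⟩
        rw [hpv, ← hmz]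
        module
    · exact segsub ⟨hztri, hzmem.2⟩ ⟨hy'tri, hy'⟩
  · rcases hout hy' with he1 | he2
    · obtain ⟨z, hz⟩ := h12
      have h12' : ∃ z : Fin d → ℝ,
          convexHull ℝ ({y2, y1} : Set (Fin d → ℝ)) ∩ (A : Set (Fin d → ℝ)) = {z} :=
        ⟨z, by rw [Set.pair_comm y2 y1]; exact hz⟩
      obtain ⟨a, b, haA, hbA, habeq⟩ := auxMain d y2 y1 y' A h12' he1 h2'
      refine ⟨a, b, haA, hbA, ?_⟩
      rw [show ({y1, y2, y'} : Set (Fin d → ℝ)) = {y2, y1, y'} from by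
        ext x; simp only [Set.mem_insert_iff, Set.mem_singleton_iff]; tauto]
      exact habeq
    · exact auxMain d y1 y2 y' A h12 he2 h1'
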